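/- arXiv:2510.06183 — 5 statements merged into one kernel-verified Lean document; each statement's English description precedes it below -/
import Mathlib

section
/- For every s ∈ (0,1] and every x > 0, κ_1(x) ≤ κ_s(x) ≤ (κ_s(0^+)/2)·κ_1(x), where κ_s(0^+) = lim_{x→0^+} κ_s(x) = ((1+s)/2)·(1/s + 1) = (1+s)^2/(2s) and κ_1(x) = 2/(x+1). -/
noncomputable def kappa (s x : ℝ) : ℝ := ((1 + s) / 2) * (1 / (x + s) + 1 / (s * x + 1))

theorem stmt3 : ∀ s ∈ Set.Ioc (0:ℝ) 1,
    Filter.Tendsto (fun x => kappa s x) (nhdsWithin 0 (Set.Ioi 0))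
      (nhds ((1 + s)^2 / (2 * s))) ∧
    ∀ x : ℝ, 0 < x →
      2 / (x + 1) ≤ kappa s x ∧ kappa s x ≤ ((1 + s)^2 / (2 * s) / 2) * (2 / (x + 1)) := by
  rintro s ⟨hs, hs1⟩
  constructor
  · have h : ContinuousWithinAt (fun x => kappa s x) (Set.Ioi 0) 0 := by
      apply ContinuousAt.continuousWithinAt
      unfold kappa
      fun_prop (disch := intros; nlinarith)
    have h0 : kappa s 0 = (1 + s)^2 / (2 * s) := by
      unfold kappa; field_simp; ring
    simpa [h0] using h.tendsto
  · intro x hx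
    have h1 : 0 < x + s := by linarith
    have h2 : 0 < s * x + 1 := by nlinarith
    have h3 : 0 < x + 1 := by linarith
    unfold kappa
    constructor
    · rw [div_le_iff₀ h3]
      have key : ((1 + s) / 2) * (1 / (x + s) + 1 / (s * x + 1)) * (x + 1) - 2 =
          ((1-s)^2 * (x-1)^2) / (2 * (x+s) * (s*x+1)) := by
        field_simp; ring
      nlinarith [div_nonneg (by positivity : (0:ℝ) ≤ (1-s)^2 * (x-1)^2) (by positivity : (0:ℝ) ≤ 2 * (x+s) * (s*x+1)), key]
    · rw [← sub_nonneg]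
      have key : ((1 + s)^2 / (2 * s) / 2) * (2 / (x + 1)) - ((1 + s) / 2) * (1 / (x + s) + 1 / (s * x + 1)) =
          ((1+s)^2 * (1-s)^2 * x) / (2 * s * (x+1) * (x+s) * (s*x+1)) := by
        field_simp; ring
      rw [key]; positivity
end

section
/- The function x/κ_1(x), where κ_1(x) = 2/(x+1), is increasing in x on (0,∞); consequently for s ∈ (0,1] the ratio κ_s(x)/κ_1(x) attains its minimum value 1 at x = 1, is decreasing on (0,1), and increasing on (1,∞). -/
lemma kappa_ratio_eq (s x : ℝ) (hs : 0 < s) (hx : 0 < x) :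
    kappa s x / (2 / (x + 1)) =
      (1 + s)^2 * (x + 1)^2 / (4 * ((x + s) * (s * x + 1))) := by
  have h1 : x + s > 0 := by linarith
  have h2 : s * x + 1 > 0 := by nlinarith
  have h3 : x + 1 > 0 := by linarith
  unfold kappa
  field_simp
  ring

theorem stmt4 :
    StrictMonoOn (fun x : ℝ => x / (2 / (x + 1))) (Set.Ioi 0) ∧
    ∀ s ∈ Set.Ioc (0:ℝ) 1,
      kappa s 1 / (2 / ((1:ℝ) + 1)) = 1 ∧
      (∀ x : ℝ, 0 < x → 1 ≤ kappa s x / (2 / (x + 1))) ∧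
      AntitoneOn (fun x => kappa s x / (2 / (x + 1))) (Set.Ioo 0 1) ∧
      MonotoneOn (fun x => kappa s x / (2 / (x + 1))) (Set.Ioi 1) := by
  constructor
  · intro a ha b hb hab
    simp only [Set.mem_Ioi] at ha hb
    have ha1 : a + 1 > 0 := by linarith
    have hb1 : b + 1 > 0 := by linarith
    have h : a / (2 / (a + 1)) = a * (a + 1) / 2 := by field_simp
    have h' : b / (2 / (b + 1)) = b * (b + 1) / 2 := by field_simp
    simp only
    rw [h, h']
    nlinarith
  · intro s hs
    obtain ⟨hs0, hs1⟩ := hs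
    have denpos : ∀ x : ℝ, 0 < x → (0:ℝ) < 4 * ((x + s) * (s * x + 1)) := by
      intro x hx
      have := mul_pos (by linarith : (0:ℝ) < x + s) (by nlinarith : (0:ℝ) < s * x + 1)
      linarith
    refine ⟨?_, ?_, ?_, ?_⟩
    · rw [kappa_ratio_eq s 1 hs0 one_pos]
      have h := denpos 1 one_pos
      field_simp
      ring
    · intro x hx
      rw [kappa_ratio_eq s x hs0 hx]
      rw [le_div_iff₀ (denpos x hx)]
      nlinarith [sq_nonneg ((1 - s) * (x - 1))]
    · intro x hx y hy hxy
      simp only [Set.mem_Ioo] at hx hy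
      simp only
      rw [kappa_ratio_eq s x hs0 hx.1, kappa_ratio_eq s y hs0 hy.1]
      rw [div_le_div_iff₀ (denpos y hy.1) (denpos x hx.1)]
      nlinarith [sq_nonneg (1 - s), mul_pos hx.1 hy.1,
        mul_nonneg (mul_nonneg (sq_nonneg (1 - s)) (sub_nonneg.mpr hxy))
          (by nlinarith : (0:ℝ) ≤ 1 - x * y)]
    · intro x hx y hy hxy
      simp only [Set.mem_Ioi] at hx hy
      have hx0 : 0 < x := lt_trans one_pos hx
      have hy0 : 0 < y := lt_trans one_pos hy
      simp only
      rw [kappa_ratio_eq s x hs0 hx0, kappa_ratio_eq s y hs0 hy0]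
      rw [div_le_div_iff₀ (denpos x hx0) (denpos y hy0)]
      nlinarith [mul_nonneg (mul_nonneg (sq_nonneg (1 - s)) (sub_nonneg.mpr hxy))
          (by nlinarith : (0:ℝ) ≤ x * y - 1)]
end

section
/- Let f : (0,∞) → ℝ be convex with f(1) = 0, differentiable at 1 with f'(1) > (f(1) − f(0^+))/(1 − 0) where f(0^+) := lim_{x→0^+} f(x) exists in ℝ. For ε ∈ (0,1) and a sequence o(ε), consider the probability vectors p_ε = ((1−o(ε))/r,…,(1−o(ε))/r, o(ε)) and q_ε = ((1−ε)/r,…,(1−ε)/r, ε) in ℝ^{r+1} (first r coordinates equal). Then lim_{ε→0^+} (1/ε)·D_f(p_ε‖q_ε) = f'(1) + f(0^+), where D_f(p‖q) = Σ_i q_i f(p_i/q_i). In particular, if f is strictly convex at 1 this limit is strictly positive. -/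
open Filter Set

theorem stmt10 (f : ℝ → ℝ) (f'1 f0 : ℝ) (r : ℕ) (o : ℝ → ℝ)
    (hconv : ConvexOn ℝ (Set.Ioi 0) f) (h1 : f 1 = 0)
    (hderiv : HasDerivAt f f'1 1)
    (hlim : Filter.Tendsto f (nhdsWithin 0 (Set.Ioi 0)) (nhds f0))
    (hstrict : (f 1 - f0) / (1 - 0) < f'1)
    (hr : 1 ≤ r)
    (ho : Filter.Tendsto (fun ε => o ε / ε) (nhdsWithin 0 (Set.Ioi 0)) (nhds 0))
    (ho' : ∀ ε ∈ Set.Ioo (0:ℝ) 1, o ε ∈ Set.Ioo (0:ℝ) 1) :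
    Filter.Tendsto
      (fun ε => (1 / ε) *
        ∑ i : Fin (r + 1),
          (if (i : ℕ) < r then (1 - ε) / (r : ℝ) else ε) *
            f ((if (i : ℕ) < r then (1 - o ε) / (r : ℝ) else o ε) /
               (if (i : ℕ) < r then (1 - ε) / (r : ℝ) else ε)))
      (nhdsWithin 0 (Set.Ioi 0)) (nhds (f'1 + f0)) ∧ 0 < f'1 + f0 := by
  have hrR : (0:ℝ) < r := by exact_mod_cast Nat.lt_of_lt_of_le Nat.zero_lt_one hr
  have hrne : (r:ℝ) ≠ 0 := ne_of_gt hrR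
  have hpos : 0 < f'1 + f0 := by
    rw [h1] at hstrict
    simp at hstrict
    linarith
  refine ⟨?_, hpos⟩
  set s : ℝ → ℝ := fun y => if y = 1 then f'1 else slope f 1 y with hsdef
  have hslope : Tendsto (slope f 1) (nhdsWithin 1 {1}ᶜ) (nhds f'1) :=
    hasDerivAt_iff_tendsto_slope.mp hderiv
  have hs1 : Tendsto s (nhds 1) (nhds f'1) := by
    rw [← nhdsNE_sup_pure 1]
    refine Tendsto.sup (Tendsto.congr' ?_ hslope) ?_
    · filter_upwards [self_mem_nhdsWithin] with y hy
      simp only [hsdef]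
      rw [if_neg (Set.mem_compl_singleton_iff.mp hy)]
    · have h : s 1 = f'1 := by simp [hsdef]
      have := tendsto_pure_nhds s 1
      rwa [h] at this
  have hid : Tendsto (fun ε : ℝ => ε) (nhdsWithin 0 (Ioi 0)) (nhds 0) :=
    tendsto_id.mono_left nhdsWithin_le_nhds
  have hoε : Tendsto o (nhdsWithin 0 (Ioi 0)) (nhds 0) := by
    have h := ho.mul hid
    rw [mul_zero] at h
    refine Tendsto.congr' ?_ h
    filter_upwards [self_mem_nhdsWithin] with ε hε
    exact div_mul_cancel₀ _ (ne_of_gt hε)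
  have hx : Tendsto (fun ε => (1 - o ε) / (1 - ε)) (nhdsWithin 0 (Ioi 0)) (nhds 1) := by
    have h : Tendsto (fun ε : ℝ => (1 - o ε) / (1 - ε)) (nhdsWithin 0 (Ioi 0))
        (nhds ((1 - 0) / (1 - 0))) :=
      Tendsto.div (Tendsto.sub tendsto_const_nhds hoε) (Tendsto.sub tendsto_const_nhds hid)
        (by norm_num)
    simpa using h
  have hmemIoo : Ioo (0:ℝ) 1 ∈ nhdsWithin (0:ℝ) (Ioi 0) :=
    Ioo_mem_nhdsGT_of_mem (by norm_num : (0:ℝ) ∈ Ico (0:ℝ) 1)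
  have hoq : Tendsto (fun ε => o ε / ε) (nhdsWithin 0 (Ioi 0)) (nhdsWithin 0 (Ioi 0)) := by
    rw [tendsto_nhdsWithin_iff]
    refine ⟨ho, ?_⟩
    filter_upwards [hmemIoo] with ε hε
    exact div_pos (ho' ε hε).1 hε.1
  have hG : Tendsto (fun ε => f (o ε / ε)) (nhdsWithin 0 (Ioi 0)) (nhds f0) := hlim.comp hoq
  have hmain : Tendsto (fun ε => s ((1 - o ε) / (1 - ε)) * (1 - o ε / ε) + f (o ε / ε))
      (nhdsWithin 0 (Ioi 0)) (nhds (f'1 + f0)) := by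
    have h1' : Tendsto (fun ε => s ((1 - o ε) / (1 - ε))) (nhdsWithin 0 (Ioi 0)) (nhds f'1) :=
      hs1.comp hx
    have h2 : Tendsto (fun ε : ℝ => 1 - o ε / ε) (nhdsWithin 0 (Ioi 0)) (nhds 1) := by
      simpa using tendsto_const_nhds.sub ho
    have := (h1'.mul h2).add hG
    simpa using this
  refine Tendsto.congr' ?_ hmain
  filter_upwards [hmemIoo] with ε hε
  obtain ⟨hε0, hε1⟩ := hε
  obtain ⟨ho0, ho1⟩ := ho' ε ⟨hε0, hε1⟩
  have hεne : ε ≠ 0 := ne_of_gt hε0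
  have h1ε : (1:ℝ) - ε ≠ 0 := by intro h; linarith [h]
  have hsum : (∑ i : Fin (r + 1),
          (if (i : ℕ) < r then (1 - ε) / (r : ℝ) else ε) *
            f ((if (i : ℕ) < r then (1 - o ε) / (r : ℝ) else o ε) /
               (if (i : ℕ) < r then (1 - ε) / (r : ℝ) else ε)))
      = (1 - ε) * f ((1 - o ε) / (1 - ε)) + ε * f (o ε / ε) := by
    rw [Fin.sum_univ_castSucc]
    have harg : ((1 - o ε) / (r:ℝ)) / ((1 - ε) / (r:ℝ)) = (1 - o ε) / (1 - ε) := by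
      rw [div_div_div_cancel_right₀]
      exact hrne
    simp only [Fin.coe_castSucc, Fin.is_lt, if_true, Fin.val_last, lt_irrefl, if_false]
    rw [harg, Finset.sum_const, Finset.card_univ, Fintype.card_fin, nsmul_eq_mul]
    field_simp
  rw [hsum]
  by_cases hoe : o ε = ε
  · have hx1 : (1 - o ε) / (1 - ε) = 1 := by rw [hoe]; field_simp
    rw [hx1, hoe, div_self hεne, h1]
    simp
  · have hxne : (1 - o ε) / (1 - ε) ≠ 1 := by
      intro h
      apply hoe
      rw [div_eq_one_iff_eq h1ε] at h
      linarith
    have hsx : s ((1 - o ε) / (1 - ε)) = slope f 1 ((1 - o ε) / (1 - ε)) := by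
      simp only [hsdef]
      rw [if_neg hxne]
    rw [hsx, slope_def_field, h1]
    have hd : (1 - o ε) / (1 - ε) - 1 = (ε - o ε) / (1 - ε) := by field_simp; ring
    rw [hd]
    have hne : ε - o ε ≠ 0 := by
      intro h
      apply hoe
      linarith
    field_simp
    ring
end

section
/- Let f, g : (0,∞) → ℝ be continuous with f(1) = g(1) = 0, twice differentiable at 1 with f''(1), g''(1) > 0, f'(1) = g'(1) = 0, and suppose f(x), g(x) > 0 for all x ≠ 1, and that the limits f(0^+), g(0^+), f'(∞) := lim_{x→∞} f(x)/x, g'(∞) := lim_{x→∞} g(x)/x exist, are finite, and strictly positive. Then there exist constants 0 < α ≤ β < ∞ such that α·g(x) ≤ f(x) ≤ β·g(x) for all x ∈ (0,∞). -/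
open Filter Set Topology

theorem stmt11 (f g : ℝ → ℝ) (f0 g0 finf ginf : ℝ)
    (hfc : ContinuousOn f (Set.Ioi 0)) (hgc : ContinuousOn g (Set.Ioi 0))
    (hf1 : f 1 = 0) (hg1 : g 1 = 0)
    (hfd : DifferentiableAt ℝ f 1) (hgd : DifferentiableAt ℝ g 1)
    (hfd2 : DifferentiableAt ℝ (deriv f) 1) (hgd2 : DifferentiableAt ℝ (deriv g) 1)
    (hf'1 : deriv f 1 = 0) (hg'1 : deriv g 1 = 0)
    (hf''1 : 0 < deriv (deriv f) 1) (hg''1 : 0 < deriv (deriv g) 1)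
    (hfpos : ∀ x : ℝ, 0 < x → x ≠ 1 → 0 < f x)
    (hgpos : ∀ x : ℝ, 0 < x → x ≠ 1 → 0 < g x)
    (hf0 : Filter.Tendsto f (nhdsWithin 0 (Set.Ioi 0)) (nhds f0))
    (hg0 : Filter.Tendsto g (nhdsWithin 0 (Set.Ioi 0)) (nhds g0))
    (hfinf : Filter.Tendsto (fun x => f x / x) Filter.atTop (nhds finf))
    (hginf : Filter.Tendsto (fun x => g x / x) Filter.atTop (nhds ginf))
    (hf0pos : 0 < f0) (hg0pos : 0 < g0) (hfinfpos : 0 < finf) (hginfpos : 0 < ginf) :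
    ∃ α β : ℝ, 0 < α ∧ α ≤ β ∧ ∀ x : ℝ, 0 < x → α * g x ≤ f x ∧ f x ≤ β * g x := by
  have key : ∀ (a b c : ℝ), c ≠ 0 → (a / c) / (b / c) = a / b := by
    intro a b c hc
    rcases eq_or_ne b 0 with hb | hb
    · simp [hb]
    · field_simp
  set r : ℝ → ℝ := fun x => f x / g x with hr
  -- slope limits for deriv f and deriv g at 1
  have hsf : Tendsto (fun x => deriv f x / (x - 1)) (𝓝[≠] 1)
      (𝓝 (deriv (deriv f) 1)) := by
    have h := hfd2.hasDerivAt
    rw [hasDerivAt_iff_tendsto_slope] at h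
    refine h.congr' ?_
    filter_upwards [self_mem_nhdsWithin] with x hx
    simp [slope_def_field, hf'1, div_eq_div_iff]
  have hsg : Tendsto (fun x => deriv g x / (x - 1)) (𝓝[≠] 1)
      (𝓝 (deriv (deriv g) 1)) := by
    have h := hgd2.hasDerivAt
    rw [hasDerivAt_iff_tendsto_slope] at h
    refine h.congr' ?_
    filter_upwards [self_mem_nhdsWithin] with x hx
    simp [slope_def_field, hg'1, div_eq_div_iff]
  -- eventual nonvanishing of deriv f, deriv g near 1
  have hfne : ∀ᶠ x in 𝓝[≠] 1, deriv f x ≠ 0 := by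
    filter_upwards [hsf.eventually_ne (ne_of_gt hf''1), self_mem_nhdsWithin]
      with x hx _
    intro h; exact hx (by simp [h])
  have hgne : ∀ᶠ x in 𝓝[≠] 1, deriv g x ≠ 0 := by
    filter_upwards [hsg.eventually_ne (ne_of_gt hg''1), self_mem_nhdsWithin]
      with x hx _
    intro h; exact hx (by simp [h])
  have hdf : ∀ᶠ x in 𝓝[≠] 1, DifferentiableAt ℝ f x := by
    filter_upwards [hfne] with x hx
    by_contra h
    exact hx (deriv_zero_of_not_differentiableAt h)
  -- limit of deriv f / deriv g
  have hdiv : Tendsto (fun x => deriv f x / deriv g x) (𝓝[≠] 1)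
      (𝓝 (deriv (deriv f) 1 / deriv (deriv g) 1)) := by
    refine (hsf.div hsg (ne_of_gt hg''1)).congr' ?_
    filter_upwards [self_mem_nhdsWithin] with x hx
    exact key _ _ _ (sub_ne_zero.mpr hx)
  -- f and g tend to 0 at 1
  have hfcont1 : ContinuousAt f 1 := hfc.continuousAt (Ioi_mem_nhds one_pos)
  have hgcont1 : ContinuousAt g 1 := hgc.continuousAt (Ioi_mem_nhds one_pos)
  have hf10 : Tendsto f (𝓝[≠] 1) (𝓝 0) := by
    have := hfcont1.continuousWithinAt (s := {(1:ℝ)}ᶜ)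
    rw [ContinuousWithinAt, hf1] at this; exact this
  have hg10 : Tendsto g (𝓝[≠] 1) (𝓝 0) := by
    have := hgcont1.continuousWithinAt (s := {(1:ℝ)}ᶜ)
    rw [ContinuousWithinAt, hg1] at this; exact this
  -- L'Hopital at 1
  have h1 : Tendsto r (𝓝[≠] 1) (𝓝 (deriv (deriv f) 1 / deriv (deriv g) 1)) :=
    deriv.lhopital_zero_nhdsNE hdf hgne hf10 hg10 hdiv
  -- limit at 0+
  have h0 : Tendsto r (𝓝[>] 0) (𝓝 (f0 / g0)) := hf0.div hg0 (ne_of_gt hg0pos)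
  -- limit at infinity
  have hinf : Tendsto r atTop (𝓝 (finf / ginf)) := by
    refine ((hfinf.div hginf (ne_of_gt hginfpos)).congr' ?_)
    filter_upwards [eventually_gt_atTop 0] with x hx
    exact key _ _ _ (ne_of_gt hx)
  set c1 := deriv (deriv f) 1 / deriv (deriv g) 1 with hc1
  have hc1pos : 0 < c1 := div_pos hf''1 hg''1
  have hc0pos : 0 < f0 / g0 := div_pos hf0pos hg0pos
  have hcIpos : 0 < finf / ginf := div_pos hfinfpos hginfpos
  -- eventual bounds
  have e1 : ∀ᶠ x in 𝓝[≠] 1, c1 / 2 < r x ∧ r x < 2 * c1 :=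
    (h1.eventually_const_lt (by linarith)).and (h1.eventually_lt_const (by linarith))
  have e0 : ∀ᶠ x in 𝓝[>] 0, f0 / g0 / 2 < r x ∧ r x < 2 * (f0 / g0) :=
    (h0.eventually_const_lt (by linarith)).and (h0.eventually_lt_const (by linarith))
  have eI : ∀ᶠ x in atTop, finf / ginf / 2 < r x ∧ r x < 2 * (finf / ginf) :=
    (hinf.eventually_const_lt (by linarith)).and (hinf.eventually_lt_const (by linarith))
  -- extract concrete neighborhoods
  rw [eventually_nhdsWithin_iff, Metric.eventually_nhds_iff] at e1 e0
  obtain ⟨ε, hε, he1⟩ := e1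
  obtain ⟨δ, hδ, he0⟩ := e0
  obtain ⟨M, heI⟩ := eventually_atTop.mp eI
  -- the compact middle
  set K : Set ℝ := Icc δ M ∩ {x | ε ≤ |x - 1|} with hK
  have hKcpt : IsCompact K :=
    isCompact_Icc.inter_right (isClosed_le continuous_const (by continuity))
  have hKsub : K ⊆ Ioi 0 := fun x hx => lt_of_lt_of_le hδ hx.1.1
  have hKne1 : ∀ x ∈ K, x ≠ 1 := by
    intro x hx h
    have := hx.2
    simp [h] at this
    linarith
  have hrK : ContinuousOn r K := by
    refine ContinuousOn.div (hfc.mono hKsub) (hgc.mono hKsub) ?_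
    intro x hx
    exact ne_of_gt (hgpos x (hKsub hx) (hKne1 x hx))
  have hKbound : ∃ a b : ℝ, 0 < a ∧ ∀ x ∈ K, a ≤ r x ∧ r x ≤ b := by
    rcases K.eq_empty_or_nonempty with hKe | hKne
    · exact ⟨1, 1, one_pos, by simp [hKe]⟩
    · obtain ⟨xm, hxm, hmin⟩ := hKcpt.exists_isMinOn hKne hrK
      obtain ⟨xM, hxM, hmax⟩ := hKcpt.exists_isMaxOn hKne hrK
      refine ⟨r xm, r xM, ?_, fun x hx => ⟨hmin hx, hmax hx⟩⟩
      exact div_pos (hfpos xm (hKsub hxm) (hKne1 xm hxm))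
        (hgpos xm (hKsub hxm) (hKne1 xm hxm))
  obtain ⟨a, b, hapos, hab⟩ := hKbound
  refine ⟨min (min (c1 / 2) (f0 / g0 / 2)) (min (finf / ginf / 2) a),
    max (max (2 * c1) (2 * (f0 / g0))) (max (2 * (finf / ginf)) b), ?_, ?_, ?_⟩
  · positivity
  · calc min (min (c1 / 2) (f0 / g0 / 2)) (min (finf / ginf / 2) a)
        ≤ c1 / 2 := le_trans (min_le_left _ _) (min_le_left _ _)
      _ ≤ 2 * c1 := by linarith
      _ ≤ _ := le_trans (le_max_left _ _) (le_max_left _ _)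
  · intro x hx
    rcases eq_or_ne x 1 with rfl | hx1
    · simp [hf1, hg1]
    have hgx : 0 < g x := hgpos x hx hx1
    have main : min (min (c1 / 2) (f0 / g0 / 2)) (min (finf / ginf / 2) a) ≤ r x ∧
        r x ≤ max (max (2 * c1) (2 * (f0 / g0))) (max (2 * (finf / ginf)) b) := by
      rcases lt_or_ge (dist x 1) ε with hd | hd
      · obtain ⟨l, u⟩ := he1 hd hx1
        constructor
        · exact le_trans (le_trans (min_le_left _ _) (min_le_left _ _)) l.le
        · exact le_trans u.le (le_trans (le_max_left _ _) (le_max_left _ _))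
      rcases lt_or_ge x δ with hxd | hxd
      · obtain ⟨l, u⟩ := he0 (by rw [Real.dist_eq]; rw [sub_zero]; rw [abs_of_pos hx]; exact hxd) hx
        constructor
        · exact le_trans (le_trans (min_le_left _ _) (min_le_right _ _)) l.le
        · exact le_trans u.le (le_trans (le_max_right _ _) (le_max_left _ _))
      rcases lt_or_ge M x with hxM | hxM
      · obtain ⟨l, u⟩ := heI x hxM.le
        constructor
        · exact le_trans (le_trans (min_le_right _ _) (min_le_left _ _)) l.le
        · exact le_trans u.le (le_trans (le_max_left _ _) (le_max_right _ _))
      · have hxK : x ∈ K := ⟨⟨hxd, hxM⟩, by simpa [Real.dist_eq] using hd⟩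
        obtain ⟨l, u⟩ := hab x hxK
        constructor
        · exact le_trans (le_trans (min_le_right _ _) (min_le_right _ _)) l
        · exact le_trans u (le_trans (le_max_right _ _) (le_max_right _ _))
    constructor
    · exact (le_div_iff₀ hgx).mp main.1
    · exact (div_le_iff₀ hgx).mp main.2
end

section
/- In a finite-dimensional inner product space with norm ‖·‖, let N, M, P be vectors satisfying N = (1−ε)·M + ε·P for some ε ∈ (0, 1/2), and suppose ‖P‖^2 ≤ c‖N‖^2 for some c > 0. Then ‖N‖^2 ≥ ((1−ε)(1−2ε)/(1 + cε(1−2ε)))·‖M‖^2. -/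
theorem stmt14 {V : Type*} [NormedAddCommGroup V] [InnerProductSpace ℝ V]
    [FiniteDimensional ℝ V] (N M P : V) (ε c : ℝ)
    (hε : ε ∈ Set.Ioo (0:ℝ) (1/2)) (hc : 0 < c)
    (hN : N = (1 - ε) • M + ε • P)
    (hP : ‖P‖^2 ≤ c * ‖N‖^2) :
    ((1 - ε) * (1 - 2*ε) / (1 + c * ε * (1 - 2*ε))) * ‖M‖^2 ≤ ‖N‖^2 := by
  obtain ⟨hε0, hε2⟩ := hε
  have h2 : 1 - 2*ε > 0 := by linarith
  have htri : (1 - ε) * ‖M‖ ≤ ‖N‖ + ε * ‖P‖ := by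
    have : (1 - ε) • M = N - ε • P := by rw [hN]; abel
    calc (1 - ε) * ‖M‖ = ‖(1 - ε) • M‖ := by
          rw [norm_smul, Real.norm_eq_abs, abs_of_pos (by linarith)]
      _ = ‖N - ε • P‖ := by rw [this]
      _ ≤ ‖N‖ + ‖ε • P‖ := norm_sub_le _ _
      _ = ‖N‖ + ε * ‖P‖ := by
          rw [norm_smul, Real.norm_eq_abs, abs_of_pos hε0]
  have hD : 0 < 1 + c * ε * (1 - 2*ε) := by positivity
  rw [div_mul_eq_mul_div, div_le_iff₀ hD]
  have ha : (0:ℝ) ≤ ‖N‖ := norm_nonneg _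
  have hb : (0:ℝ) ≤ ‖P‖ := norm_nonneg _
  have hm : (0:ℝ) ≤ ‖M‖ := norm_nonneg _
  nlinarith [sq_nonneg (‖N‖ - (1 - 2*ε) * ‖P‖), sq_nonneg (‖N‖ + ε * ‖P‖ - (1 - ε) * ‖M‖),
    mul_nonneg (mul_nonneg hε0.le h2.le) (sq_nonneg (‖N‖ - (1 - 2*ε) * ‖P‖)),
    mul_nonneg (mul_nonneg hε0.le hc.le) (sq_nonneg (‖N‖ - (1 - 2*ε) * ‖P‖)),
    mul_le_mul htri htri (mul_nonneg (by linarith : (0:ℝ) ≤ 1 - ε) hm) (by positivity),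
    mul_nonneg hε0.le (sub_nonneg.2 hP),
    mul_le_mul_of_nonneg_left hP (mul_nonneg hε0.le h2.le),
    sq_nonneg ((1 - ε) * ‖M‖)]
end
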